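/- Let R be a commutative ring. The assignments 𝕏 = (X_n)_{n∈ℤ} ↦ {((X_n)_m)_{n∈ℤ} : m a maximal ideal of R} and {(X(m)_n)_{n∈ℤ} : m} ↦ (⋃_m X(m)_n*)_{n∈ℤ} are mutually inverse bijections between Thomason filtrations of Spec(R) and compatible families of Thomason filtrations of the spectra Spec(R_m). In particular, if 𝕏 = (X_n) is a Thomason filtration of Spec(R), then for each maximal ideal m the sequence ((X_n)_m : n ∈ ℤ) is a Thomason filtration of Spec(R_m) and this family is compatible; conversely, for a compatible family of Thomason filtrations {(X(m)_n)_{n∈ℤ} : m}, the sequence (⋃_m X(m)_n* : n ∈ ℤ) is a Thomason filtration of Spec(R) whose localization at each maximal ideal m recovers (X(m)_n)_{n∈ℤ}. -/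

import Mathlib

open PrimeSpectrum
universe u

/-- A subset of `Spec A` is Thomason if it is a union of the zero loci
of a set of finitely generated ideals. -/
def IsThomason {A : Type*} [CommRing A] (X : Set (PrimeSpectrum A)) : Prop :=
  ∃ 𝓘 : Set (Ideal A), (∀ I ∈ 𝓘, I.FG) ∧
    X = ⋃ I ∈ 𝓘, PrimeSpectrum.zeroLocus (I : Set A)

variable {R : Type u} [CommRing R]

/-- The map `Spec (R_m) → Spec R` induced by the localization map. -/
def locMap (m : MaximalSpectrum R) :
    PrimeSpectrum (Localization.AtPrime m.asIdeal) → PrimeSpectrum R :=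
  PrimeSpectrum.comap (algebraMap R (Localization.AtPrime m.asIdeal))

/-- `Y*`: the image of a subset of `Spec (R_m)` in `Spec R`. -/
def star (m : MaximalSpectrum R)
    (Y : Set (PrimeSpectrum (Localization.AtPrime m.asIdeal))) : Set (PrimeSpectrum R) :=
  locMap m '' Y

/-- `p_m`: the prime ideal `p R_m` of `R_m` corresponding to a prime `p ⊆ m` of `R`. -/
def localizedPrime (m : MaximalSpectrum R) (p : PrimeSpectrum R)
    (hp : p.asIdeal ≤ m.asIdeal) : PrimeSpectrum (Localization.AtPrime m.asIdeal) :=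
  ⟨p.asIdeal.map (algebraMap R (Localization.AtPrime m.asIdeal)),
    IsLocalization.isPrime_of_isPrime_disjoint m.asIdeal.primeCompl _ p.asIdeal p.isPrime
      (Set.disjoint_left.mpr fun _ hx hxp => hx (hp hxp))⟩

/-- `Z_m = {p_m : p ∈ Z, p ⊆ m}`, the localization of a subset `Z ⊆ Spec R` at `m`. -/
def setLoc (m : MaximalSpectrum R) (Z : Set (PrimeSpectrum R)) :
    Set (PrimeSpectrum (Localization.AtPrime m.asIdeal)) :=
  {q | ∃ p ∈ Z, ∃ hp : p.asIdeal ≤ m.asIdeal, localizedPrime m p hp = q}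

/-- Condition (†). -/
def Dagger (Xf : ∀ m : MaximalSpectrum R, Set (PrimeSpectrum (Localization.AtPrime m.asIdeal))) :
    Prop :=
  ∀ m m' : MaximalSpectrum R,
    {p ∈ star m (Xf m) | p.asIdeal ≤ m'.asIdeal} =
      {p ∈ star m' (Xf m') | p.asIdeal ≤ m.asIdeal}

/-- A compatible family of Thomason subsets: each `X(m)` is Thomason, the family
satisfies (†), and the union `⋃ X(m)*` is a Thomason subset of `Spec R`. -/
def CompatibleFamily
    (Xf : ∀ m : MaximalSpectrum R, Set (PrimeSpectrum (Localization.AtPrime m.asIdeal))) :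
    Prop :=
  (∀ m, IsThomason (Xf m)) ∧ Dagger Xf ∧ IsThomason (⋃ m, star m (Xf m))


/-- A Thomason filtration: a decreasing `ℤ`-indexed sequence of Thomason subsets. -/
def IsThomasonFiltration {A : Type*} [CommRing A]
    (𝕏 : ℤ → Set (PrimeSpectrum A)) : Prop :=
  (∀ n, IsThomason (𝕏 n)) ∧ ∀ n : ℤ, 𝕏 (n + 1) ⊆ 𝕏 n

/-- A compatible family of Thomason filtrations: for each `n ∈ ℤ` the family
of `n`-th terms is a compatible family of Thomason subsets. -/
def CompatibleFiltrationFamily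
    (Xf : ∀ m : MaximalSpectrum R, ℤ → Set (PrimeSpectrum (Localization.AtPrime m.asIdeal))) :
    Prop :=
  ∀ n : ℤ, CompatibleFamily (fun m => Xf m n)

lemma locMap_le (m : MaximalSpectrum R) (q : PrimeSpectrum (Localization.AtPrime m.asIdeal)) :
    (locMap m q).asIdeal ≤ m.asIdeal := by
  intro x hx
  by_contra hxm
  have hu : IsUnit (algebraMap R (Localization.AtPrime m.asIdeal) x) :=
    IsLocalization.map_units _ (⟨x, hxm⟩ : m.asIdeal.primeCompl)
  exact q.isPrime.ne_top (Ideal.eq_top_of_isUnit_mem _ hx hu)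

lemma locMap_localizedPrime (m : MaximalSpectrum R) (p : PrimeSpectrum R)
    (hp : p.asIdeal ≤ m.asIdeal) : locMap m (localizedPrime m p hp) = p := by
  apply PrimeSpectrum.ext
  exact IsLocalization.comap_map_of_isPrime_disjoint m.asIdeal.primeCompl _ p.isPrime
    (Set.disjoint_left.mpr fun _ hx hxp => hx (hp hxp))

lemma localizedPrime_locMap (m : MaximalSpectrum R)
    (q : PrimeSpectrum (Localization.AtPrime m.asIdeal)) :
    localizedPrime m (locMap m q) (locMap_le m q) = q := by
  apply PrimeSpectrum.ext
  exact IsLocalization.map_comap m.asIdeal.primeCompl _ q.asIdeal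

lemma setLoc_eq_preimage (m : MaximalSpectrum R) (Z : Set (PrimeSpectrum R)) :
    setLoc m Z = locMap m ⁻¹' Z := by
  ext q
  constructor
  · rintro ⟨p, hpZ, hp, rfl⟩
    simpa [Set.mem_preimage, locMap_localizedPrime m p hp] using hpZ
  · intro hq
    exact ⟨locMap m q, hq, locMap_le m q, localizedPrime_locMap m q⟩

lemma star_setLoc (m : MaximalSpectrum R) (Z : Set (PrimeSpectrum R)) :
    star m (setLoc m Z) = {p ∈ Z | p.asIdeal ≤ m.asIdeal} := by
  ext p
  constructor
  · rintro ⟨q, hq, rfl⟩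
    rw [setLoc_eq_preimage] at hq
    exact ⟨hq, locMap_le m q⟩
  · rintro ⟨hpZ, hp⟩
    refine ⟨localizedPrime m p hp, ?_, locMap_localizedPrime m p hp⟩
    exact ⟨p, hpZ, hp, rfl⟩

lemma isThomason_setLoc (m : MaximalSpectrum R) {Z : Set (PrimeSpectrum R)}
    (h : IsThomason Z) : IsThomason (setLoc m Z) := by
  obtain ⟨𝓘, hFG, rfl⟩ := h
  refine ⟨(fun I => I.map (algebraMap R (Localization.AtPrime m.asIdeal))) '' 𝓘, ?_, ?_⟩
  · rintro J ⟨I, hI, rfl⟩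
    exact (hFG I hI).map _
  · rw [setLoc_eq_preimage]
    rw [Set.preimage_iUnion₂]
    rw [Set.biUnion_image]
    refine Set.iUnion₂_congr fun I hI => ?_
    show PrimeSpectrum.comap _ ⁻¹' _ = _
    rw [preimage_comap_zeroLocus, ← zeroLocus_span, ← Ideal.map]

lemma mem_star_le (m : MaximalSpectrum R)
    {Y : Set (PrimeSpectrum (Localization.AtPrime m.asIdeal))} {p : PrimeSpectrum R}
    (hp : p ∈ star m Y) : p.asIdeal ≤ m.asIdeal := by
  obtain ⟨q, _, rfl⟩ := hp
  exact locMap_le m q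

lemma locMap_injective (m : MaximalSpectrum R) : Function.Injective (locMap m) := by
  intro q q' h
  apply PrimeSpectrum.ext
  rw [← IsLocalization.map_comap m.asIdeal.primeCompl (Localization.AtPrime m.asIdeal) q.asIdeal,
    ← IsLocalization.map_comap m.asIdeal.primeCompl (Localization.AtPrime m.asIdeal) q'.asIdeal]
  exact congrArg (Ideal.map _) (congrArg PrimeSpectrum.asIdeal h)

/-- Gluing of Thomason filtrations: `𝕏 ↦ {((X_n)_m)_n}` and
`{(X(m)_n)_n} ↦ (⋃_m X(m)_n*)_n` are mutually inverse bijections between Thomason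
filtrations of `Spec R` and compatible families of Thomason filtrations over the
localizations at maximal ideals. -/
theorem stmt3 :
    (∀ 𝕏 : ℤ → Set (PrimeSpectrum R), IsThomasonFiltration 𝕏 →
      (∀ m : MaximalSpectrum R, IsThomasonFiltration (fun n => setLoc m (𝕏 n))) ∧
      CompatibleFiltrationFamily (fun m n => setLoc m (𝕏 n)) ∧
      (∀ n : ℤ, (⋃ m : MaximalSpectrum R, star m (setLoc m (𝕏 n))) = 𝕏 n)) ∧
    (∀ Xf : ∀ m : MaximalSpectrum R, ℤ → Set (PrimeSpectrum (Localization.AtPrime m.asIdeal)),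
      (∀ m, IsThomasonFiltration (Xf m)) → CompatibleFiltrationFamily Xf →
      IsThomasonFiltration (fun n => ⋃ m : MaximalSpectrum R, star m (Xf m n)) ∧
      (∀ (m : MaximalSpectrum R) (n : ℤ),
        setLoc m (⋃ m' : MaximalSpectrum R, star m' (Xf m' n)) = Xf m n)) := by
  constructor
  · intro 𝕏 h𝕏
    obtain ⟨hT, hdec⟩ := h𝕏
    have key : ∀ n : ℤ, (⋃ m : MaximalSpectrum R, star m (setLoc m (𝕏 n))) = 𝕏 n := by
      intro n
      ext p
      simp only [Set.mem_iUnion, star_setLoc, Set.mem_setOf_eq]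
      constructor
      · rintro ⟨m, hp, _⟩; exact hp
      · intro hp
        obtain ⟨M, hM, hle⟩ := p.asIdeal.exists_le_maximal p.isPrime.ne_top
        exact ⟨⟨M, hM⟩, hp, hle⟩
    refine ⟨fun m => ⟨fun n => isThomason_setLoc m (hT n), fun n => ?_⟩,
      fun n => ⟨fun m => isThomason_setLoc m (hT n), fun m m' => ?_, ?_⟩, key⟩
    · show setLoc m (𝕏 (n+1)) ⊆ setLoc m (𝕏 n)
      rw [setLoc_eq_preimage, setLoc_eq_preimage]
      exact Set.preimage_mono (hdec n)
    · rw [star_setLoc, star_setLoc]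
      ext p
      simp only [Set.mem_setOf_eq]
      tauto
    · rw [key n]
      exact hT n
  · intro Xf hXf hcomp
    constructor
    · refine ⟨fun n => (hcomp n).2.2, fun n => ?_⟩
      intro p hp
      simp only [Set.mem_iUnion] at hp ⊢
      obtain ⟨m, q, hq, rfl⟩ := hp
      exact ⟨m, q, (hXf m).2 n hq, rfl⟩
    · intro m n
      rw [setLoc_eq_preimage]
      ext q
      simp only [Set.mem_preimage, Set.mem_iUnion]
      constructor
      · rintro ⟨m', hm'⟩
        have hle : (locMap m q).asIdeal ≤ m.asIdeal := locMap_le m q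
        have hd := (hcomp n).2.1 m m'
        have hmem : locMap m q ∈ {p ∈ star m' (Xf m' n) | p.asIdeal ≤ m.asIdeal} := ⟨hm', hle⟩
        rw [← hd] at hmem
        obtain ⟨⟨q', hq', heq⟩, _⟩ := hmem
        rwa [locMap_injective m heq] at hq'
      · intro hq
        exact ⟨m, q, hq, rfl⟩
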